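/- arXiv:1709.07987 — 2 statements merged into one kernel-verified Lean document; each statement's English description precedes it below -/
import Mathlib

section
/- (Dual Bell–CHSH inequality.) Let d_A, d_B ≥ 2 and let M₁ be an effect on ℂ^{d_A} ⊗ ℂ^{d_B} that is separable positive, i.e., M₁ = Σᵢ Aᵢ ⊗ Bᵢ (finite sum, Kronecker product) with each Aᵢ and Bᵢ positive semidefinite, and suppose tr M₁ ≤ 1. Set M = 2M₁ − 𝟙. Then for all quantum states ρ₀^A, ρ₁^A on ℂ^{d_A} and ρ₀^B, ρ₁^B on ℂ^{d_B}, the quantity D = E(ρ₀^A, ρ₀^B, M) + E(ρ₀^A, ρ₁^B, M) + E(ρ₁^A, ρ₀^B, M) − E(ρ₁^A, ρ₁^B, M) satisfies −2 ≤ D ≤ 2. -/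
open Matrix Kronecker ComplexOrder

/-- A quantum state: positive semidefinite matrix of trace one. -/
def IsState {d : ℕ} (ρ : Matrix (Fin d) (Fin d) ℂ) : Prop :=
  ρ.PosSemidef ∧ ρ.trace = 1

/-- Separable positivity: a finite sum of Kronecker products of
positive semidefinite matrices. -/
def SepPos {dA dB : ℕ} (S : Matrix (Fin dA × Fin dB) (Fin dA × Fin dB) ℂ) : Prop :=
  ∃ (n : ℕ) (A : Fin n → Matrix (Fin dA) (Fin dA) ℂ)
    (B : Fin n → Matrix (Fin dB) (Fin dB) ℂ),
    (∀ i, (A i).PosSemidef) ∧ (∀ i, (B i).PosSemidef) ∧ S = ∑ i, (A i) ⊗ₖ (B i)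

/-- The difference from ignorance
`E(ρᴬ, ρᴮ, M) = (α_{d_A} α_{d_B} / 2) · Re tr(((ρᴬ - 𝟙/d_A) ⊗ (ρᴮ - 𝟙/d_B)) M)`. -/
noncomputable def Ediff (dA dB : ℕ)
    (ρA : Matrix (Fin dA) (Fin dA) ℂ) (ρB : Matrix (Fin dB) (Fin dB) ℂ)
    (M : Matrix (Fin dA × Fin dB) (Fin dA × Fin dB) ℂ) : ℝ :=
  ((dA : ℝ) / ((dA : ℝ) - 1)) * ((dB : ℝ) / ((dB : ℝ) - 1)) / 2 *
    ((((ρA - (dA : ℂ)⁻¹ • 1) ⊗ₖ (ρB - (dB : ℂ)⁻¹ • 1)) * M).trace).re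

/- ### Auxiliary lemmas -/

lemma diag_nonneg' {d : ℕ} {M : Matrix (Fin d) (Fin d) ℂ} (h : M.PosSemidef) (i : Fin d) :
    0 ≤ M i i := by
  exact h.diag_nonneg

lemma trace_nonneg' {d : ℕ} {M : Matrix (Fin d) (Fin d) ℂ} (h : M.PosSemidef) :
    0 ≤ M.trace := by
  rw [Matrix.trace]
  exact Finset.sum_nonneg fun i _ => diag_nonneg' h i

lemma trace_mul_nonneg' {d : ℕ} {P Q : Matrix (Fin d) (Fin d) ℂ}
    (hP : P.PosSemidef) (hQ : Q.PosSemidef) : 0 ≤ (P * Q).trace := by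
  obtain ⟨B, rfl⟩ : ∃ B : Matrix (Fin d) (Fin d) ℂ, P = Bᴴ * B := by
    open scoped MatrixOrder in
    exact CStarAlgebra.nonneg_iff_eq_star_mul_self.mp hP.nonneg
  rw [← Matrix.trace_mul_cycle]
  exact trace_nonneg' (hQ.mul_mul_conjTranspose_same B)

lemma trace_mul_im_zero' {d : ℕ} {X A : Matrix (Fin d) (Fin d) ℂ}
    (hX : X.IsHermitian) (hA : A.IsHermitian) : ((X * A).trace).im = 0 := by
  have : (starRingEnd ℂ) (X * A).trace = (X * A).trace := by
    calc (starRingEnd ℂ) (X * A).trace = ((X * A)ᴴ).trace := (Matrix.trace_conjTranspose _).symm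
      _ = (Aᴴ * Xᴴ).trace := by rw [conjTranspose_mul]
      _ = (A * X).trace := by rw [hA.eq, hX.eq]
      _ = (X * A).trace := Matrix.trace_mul_comm _ _
  exact Complex.conj_eq_iff_im.mp this

lemma one_sub_psd {d : ℕ} {ρ : Matrix (Fin d) (Fin d) ℂ} (h : ρ.PosSemidef)
    (htr : ρ.trace = 1) : ((1 : Matrix (Fin d) (Fin d) ℂ) - ρ).PosSemidef := by
  have hH := h.isHermitian
  set U : Matrix (Fin d) (Fin d) ℂ := (hH.eigenvectorUnitary : Matrix (Fin d) (Fin d) ℂ) with hUdef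
  have hUU : star U * U = 1 := (Matrix.mem_unitaryGroup_iff').mp hH.eigenvectorUnitary.2
  have hUU' : U * star U = 1 := (Matrix.mem_unitaryGroup_iff).mp hH.eigenvectorUnitary.2
  have hspec : ρ = U * Matrix.diagonal (RCLike.ofReal ∘ hH.eigenvalues) * star U :=
    hH.spectral_theorem
  have htrρ : ρ.trace = ∑ i, (hH.eigenvalues i : ℂ) := by
    conv_lhs => rw [hspec]
    rw [Matrix.trace_mul_cycle, hUU, Matrix.one_mul, Matrix.trace_diagonal]
    rfl
  have hsum : ∑ i, hH.eigenvalues i = 1 := by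
    have h2 : ((∑ i, hH.eigenvalues i : ℝ) : ℂ) = 1 := by
      push_cast
      rw [← htrρ, htr]
    exact_mod_cast h2
  have hle : ∀ i, hH.eigenvalues i ≤ 1 := by
    intro i
    calc hH.eigenvalues i ≤ ∑ j, hH.eigenvalues j :=
          Finset.single_le_sum (fun j _ => h.eigenvalues_nonneg j) (Finset.mem_univ i)
      _ = 1 := hsum
  have hkey : (1 : Matrix (Fin d) (Fin d) ℂ) - ρ
      = U * Matrix.diagonal (fun i => ((1 - hH.eigenvalues i : ℝ) : ℂ)) * star U := by
    have hdg : Matrix.diagonal (fun i => ((1 - hH.eigenvalues i : ℝ) : ℂ))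
        = 1 - Matrix.diagonal (RCLike.ofReal ∘ hH.eigenvalues) := by
      rw [← Matrix.diagonal_one, Matrix.diagonal_sub]
      congr 1
      funext i
      push_cast
      simp
    rw [hdg, Matrix.mul_sub, Matrix.sub_mul, Matrix.mul_one, hUU', ← hspec]
  rw [hkey]
  have hD : (Matrix.diagonal (fun i => ((1 - hH.eigenvalues i : ℝ) : ℂ))).PosSemidef := by
    apply Matrix.PosSemidef.diagonal
    intro i
    have h3 : (0:ℝ) ≤ 1 - hH.eigenvalues i := by linarith [hle i]
    show (0:ℂ) ≤ ((1 - hH.eigenvalues i : ℝ) : ℂ)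
    exact_mod_cast h3
  simpa [Matrix.star_eq_conjTranspose] using hD.mul_mul_conjTranspose_same U

lemma side_bound {d : ℕ} (hd : 2 ≤ d) {ρ A : Matrix (Fin d) (Fin d) ℂ}
    (hρ : IsState ρ) (hA : A.PosSemidef) :
    |((d:ℝ)/((d:ℝ)-1)) * (((ρ - (d:ℂ)⁻¹ • 1) * A).trace).re| ≤ A.trace.re := by
  have hd2 : (2:ℝ) ≤ (d:ℝ) := by exact_mod_cast hd
  have hd1 : (0:ℝ) < (d:ℝ) - 1 := by linarith
  have hd0 : (0:ℝ) < (d:ℝ) := by linarith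
  have hexp : ((ρ - (d:ℂ)⁻¹ • 1) * A).trace = (ρ * A).trace - (d:ℂ)⁻¹ * A.trace := by
    rw [Matrix.sub_mul, Matrix.trace_sub, Matrix.smul_mul, Matrix.one_mul, Matrix.trace_smul]
    simp
  set u : ℝ := ((ρ * A).trace).re with hu
  set t : ℝ := A.trace.re with ht
  have hre : (((ρ - (d:ℂ)⁻¹ • 1) * A).trace).re = u - (d:ℝ)⁻¹ * t := by
    rw [hexp]
    have h4 : ((d:ℂ)⁻¹ * A.trace).re = (d:ℝ)⁻¹ * t := by
      have h5 : ((d:ℂ))⁻¹ = (((d:ℝ)⁻¹ : ℝ) : ℂ) := by push_cast; ring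
      rw [h5, Complex.re_ofReal_mul]
    simp [Complex.sub_re, h4, hu]
  have hu0 : 0 ≤ u := (Complex.le_def.mp (trace_mul_nonneg' hρ.1 hA)).1
  have ht0 : 0 ≤ t := by
    have := (Complex.le_def.mp (trace_nonneg' hA)).1
    simpa using this
  have hut : u ≤ t := by
    have h1 : 0 ≤ (((1 : Matrix (Fin d) (Fin d) ℂ) - ρ) * A).trace :=
      trace_mul_nonneg' (one_sub_psd hρ.1 hρ.2) hA
    have h2 : (((1 : Matrix (Fin d) (Fin d) ℂ) - ρ) * A).trace = A.trace - (ρ * A).trace := by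
      rw [Matrix.sub_mul, Matrix.trace_sub, Matrix.one_mul]
    rw [h2] at h1
    have := (Complex.le_def.mp h1).1
    simp [Complex.sub_re] at this
    linarith [this]
  rw [hre]
  have heq : (d:ℝ)/((d:ℝ)-1) * (u - (d:ℝ)⁻¹ * t) = ((d:ℝ)*u - t)/((d:ℝ)-1) := by
    field_simp
  rw [heq, abs_le]
  constructor
  · rw [le_div_iff₀ hd1]
    nlinarith
  · rw [div_le_iff₀ hd1]
    nlinarith

lemma chsh_key {a₀ a₁ b₀ b₁ α β : ℝ} (hα : 0 ≤ α) (h0 : |a₀| ≤ α) (h1 : |a₁| ≤ α)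
    (h2 : |b₀| ≤ β) (h3 : |b₁| ≤ β) :
    a₀ * b₀ + a₀ * b₁ + a₁ * b₀ - a₁ * b₁ ≤ 2 * (α * β) := by
  have e1 : a₀ * (b₀ + b₁) ≤ α * |b₀ + b₁| :=
    le_trans (le_abs_self _) (by rw [abs_mul]; exact mul_le_mul_of_nonneg_right h0 (abs_nonneg _))
  have e2 : a₁ * (b₀ - b₁) ≤ α * |b₀ - b₁| :=
    le_trans (le_abs_self _) (by rw [abs_mul]; exact mul_le_mul_of_nonneg_right h1 (abs_nonneg _))
  obtain ⟨h2a, h2b⟩ := abs_le.mp h2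
  obtain ⟨h3a, h3b⟩ := abs_le.mp h3
  have e3 : |b₀ + b₁| + |b₀ - b₁| ≤ 2 * β := by
    rcases abs_cases (b₀ + b₁) with ⟨hx, _⟩ | ⟨hx, _⟩ <;>
      rcases abs_cases (b₀ - b₁) with ⟨hy, _⟩ | ⟨hy, _⟩ <;> rw [hx, hy] <;> linarith
  nlinarith [mul_le_mul_of_nonneg_left e3 hα]

lemma trace_expand {dA dB n : ℕ} (hdA : dA ≠ 0)
    (A : Fin n → Matrix (Fin dA) (Fin dA) ℂ) (B : Fin n → Matrix (Fin dB) (Fin dB) ℂ)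
    (ρ : Matrix (Fin dA) (Fin dA) ℂ) (σ : Matrix (Fin dB) (Fin dB) ℂ)
    (hρ : ρ.trace = 1) :
    ((((ρ - (dA:ℂ)⁻¹ • 1) ⊗ₖ (σ - (dB:ℂ)⁻¹ • 1)) * ((2:ℂ) • (∑ i, A i ⊗ₖ B i) - 1)).trace)
      = 2 * ∑ i, ((ρ - (dA:ℂ)⁻¹ • 1) * A i).trace * ((σ - (dB:ℂ)⁻¹ • 1) * B i).trace := by
  set X := ρ - (dA:ℂ)⁻¹ • 1 with hXdef
  set Y := σ - (dB:ℂ)⁻¹ • 1 with hYdef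
  have hX : X.trace = 0 := by
    rw [hXdef, Matrix.trace_sub, Matrix.trace_smul, Matrix.trace_one, hρ]
    have : ((dA : ℂ) ≠ 0) := Nat.cast_ne_zero.mpr hdA
    field_simp
    simp [Fintype.card_fin, this]
  rw [Matrix.mul_sub, Matrix.mul_one, Matrix.trace_sub, Matrix.trace_kronecker, hX, zero_mul,
    sub_zero, mul_smul_comm, Matrix.trace_smul, Finset.mul_sum, Matrix.trace_sum,
    smul_eq_mul, Finset.mul_sum]
  rw [Finset.mul_sum]
  apply Finset.sum_congr rfl
  intro i _
  rw [← Matrix.mul_kronecker_mul, Matrix.trace_kronecker]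

lemma smul_one_hermitian {d : ℕ} (c : ℕ) :
    ((c:ℂ)⁻¹ • (1 : Matrix (Fin d) (Fin d) ℂ)).IsHermitian := by
  unfold Matrix.IsHermitian
  rw [Matrix.conjTranspose_smul, Matrix.conjTranspose_one]
  congr 1
  simp

/-- Dual Bell–CHSH inequality -/
theorem dual_bell_chsh
    (dA dB : ℕ) (hdA : 2 ≤ dA) (hdB : 2 ≤ dB)
    (M₁ : Matrix (Fin dA × Fin dB) (Fin dA × Fin dB) ℂ)
    (hM₁ : M₁.PosSemidef)
    (hM₁' : ((1 : Matrix (Fin dA × Fin dB) (Fin dA × Fin dB) ℂ) - M₁).PosSemidef)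
    (hsep : SepPos M₁) (htr : M₁.trace ≤ 1)
    (ρA₀ ρA₁ : Matrix (Fin dA) (Fin dA) ℂ) (ρB₀ ρB₁ : Matrix (Fin dB) (Fin dB) ℂ)
    (hA₀ : IsState ρA₀) (hA₁ : IsState ρA₁) (hB₀ : IsState ρB₀) (hB₁ : IsState ρB₁) :
    -2 ≤ Ediff dA dB ρA₀ ρB₀ ((2 : ℂ) • M₁ - 1) + Ediff dA dB ρA₀ ρB₁ ((2 : ℂ) • M₁ - 1)
        + Ediff dA dB ρA₁ ρB₀ ((2 : ℂ) • M₁ - 1) - Ediff dA dB ρA₁ ρB₁ ((2 : ℂ) • M₁ - 1) ∧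
      Ediff dA dB ρA₀ ρB₀ ((2 : ℂ) • M₁ - 1) + Ediff dA dB ρA₀ ρB₁ ((2 : ℂ) • M₁ - 1)
        + Ediff dA dB ρA₁ ρB₀ ((2 : ℂ) • M₁ - 1) - Ediff dA dB ρA₁ ρB₁ ((2 : ℂ) • M₁ - 1) ≤ 2 := by
  obtain ⟨n, A, B, hApsd, hBpsd, hMeq⟩ := hsep
  have hdA0 : dA ≠ 0 := by omega
  have hdB0 : dB ≠ 0 := by omega
  set αA : ℝ := (dA:ℝ)/((dA:ℝ)-1) with hαA
  set αB : ℝ := (dB:ℝ)/((dB:ℝ)-1) with hαB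
  -- expansion of Ediff
  have hE : ∀ (ρ : Matrix (Fin dA) (Fin dA) ℂ) (σ : Matrix (Fin dB) (Fin dB) ℂ),
      IsState ρ → IsState σ →
      Ediff dA dB ρ σ ((2 : ℂ) • M₁ - 1)
        = ∑ i, (αA * (((ρ - (dA:ℂ)⁻¹ • 1) * A i).trace).re)
            * (αB * (((σ - (dB:ℂ)⁻¹ • 1) * B i).trace).re) := by
    intro ρ σ hρ hσ
    unfold Ediff
    rw [hMeq, trace_expand hdA0 A B ρ σ hρ.2]
    have him : ∀ i : Fin n,
        ((((ρ - (dA:ℂ)⁻¹ • 1) * A i).trace) * (((σ - (dB:ℂ)⁻¹ • 1) * B i).trace)).re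
          = (((ρ - (dA:ℂ)⁻¹ • 1) * A i).trace).re * (((σ - (dB:ℂ)⁻¹ • 1) * B i).trace).re := by
      intro i
      have hρh : (ρ - (dA:ℂ)⁻¹ • 1).IsHermitian :=
        hρ.1.isHermitian.sub (smul_one_hermitian dA)
      have hσh : (σ - (dB:ℂ)⁻¹ • 1).IsHermitian :=
        hσ.1.isHermitian.sub (smul_one_hermitian dB)
      rw [Complex.mul_re, trace_mul_im_zero' hρh (hApsd i).isHermitian,
        trace_mul_im_zero' hσh (hBpsd i).isHermitian]
      ring
    have h2re : ((2:ℂ) * ∑ i, ((ρ - (dA:ℂ)⁻¹ • 1) * A i).trace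
        * ((σ - (dB:ℂ)⁻¹ • 1) * B i).trace).re
        = 2 * ∑ i, (((ρ - (dA:ℂ)⁻¹ • 1) * A i).trace).re
            * (((σ - (dB:ℂ)⁻¹ • 1) * B i).trace).re := by
      rw [show ((2:ℂ) = ((2:ℝ):ℂ)) by norm_num, Complex.re_ofReal_mul, Complex.re_sum]
      congr 1
      exact Finset.sum_congr rfl fun i _ => him i
    rw [h2re, Finset.mul_sum, Finset.mul_sum]
    apply Finset.sum_congr rfl
    intro i _
    ring
  -- abbreviations
  set a₀ : Fin n → ℝ := fun i => αA * (((ρA₀ - (dA:ℂ)⁻¹ • 1) * A i).trace).re with ha₀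
  set a₁ : Fin n → ℝ := fun i => αA * (((ρA₁ - (dA:ℂ)⁻¹ • 1) * A i).trace).re with ha₁
  set b₀ : Fin n → ℝ := fun i => αB * (((ρB₀ - (dB:ℂ)⁻¹ • 1) * B i).trace).re with hb₀
  set b₁ : Fin n → ℝ := fun i => αB * (((ρB₁ - (dB:ℂ)⁻¹ • 1) * B i).trace).re with hb₁
  set tA : Fin n → ℝ := fun i => (A i).trace.re with htA
  set tB : Fin n → ℝ := fun i => (B i).trace.re with htB
  have hba₀ : ∀ i, |a₀ i| ≤ tA i := fun i => side_bound hdA hA₀ (hApsd i)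
  have hba₁ : ∀ i, |a₁ i| ≤ tA i := fun i => side_bound hdA hA₁ (hApsd i)
  have hbb₀ : ∀ i, |b₀ i| ≤ tB i := fun i => side_bound hdB hB₀ (hBpsd i)
  have hbb₁ : ∀ i, |b₁ i| ≤ tB i := fun i => side_bound hdB hB₁ (hBpsd i)
  have htA0 : ∀ i, 0 ≤ tA i := fun i => le_trans (abs_nonneg _) (hba₀ i)
  have htB0 : ∀ i, 0 ≤ tB i := fun i => le_trans (abs_nonneg _) (hbb₀ i)
  -- trace bound
  have htr1 : ∑ i, tA i * tB i ≤ 1 := by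
    have hre : (M₁.trace).re = ∑ i, tA i * tB i := by
      rw [hMeq, Matrix.trace_sum, Complex.re_sum]
      apply Finset.sum_congr rfl
      intro i _
      rw [Matrix.trace_kronecker, Complex.mul_re]
      have hia : ((A i).trace).im = 0 := by
        have := (Complex.le_def.mp (trace_nonneg' (hApsd i))).2
        simpa using this.symm
      have hib : ((B i).trace).im = 0 := by
        have := (Complex.le_def.mp (trace_nonneg' (hBpsd i))).2
        simpa using this.symm
      rw [hia, hib]
      ring
    have := (Complex.le_def.mp htr).1
    simp only [Complex.one_re] at this
    linarith [hre ▸ this]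
  -- the CHSH sum
  have hDsum : Ediff dA dB ρA₀ ρB₀ ((2 : ℂ) • M₁ - 1) + Ediff dA dB ρA₀ ρB₁ ((2 : ℂ) • M₁ - 1)
      + Ediff dA dB ρA₁ ρB₀ ((2 : ℂ) • M₁ - 1) - Ediff dA dB ρA₁ ρB₁ ((2 : ℂ) • M₁ - 1)
      = ∑ i, (a₀ i * b₀ i + a₀ i * b₁ i + a₁ i * b₀ i - a₁ i * b₁ i) := by
    rw [hE ρA₀ ρB₀ hA₀ hB₀, hE ρA₀ ρB₁ hA₀ hB₁, hE ρA₁ ρB₀ hA₁ hB₀, hE ρA₁ ρB₁ hA₁ hB₁,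
      ← Finset.sum_add_distrib, ← Finset.sum_add_distrib, ← Finset.sum_sub_distrib]
  rw [hDsum]
  constructor
  · -- lower bound
    have hterm : ∀ i ∈ Finset.univ, -(2 * (tA i * tB i))
        ≤ a₀ i * b₀ i + a₀ i * b₁ i + a₁ i * b₀ i - a₁ i * b₁ i := by
      intro i _
      have := chsh_key (htA0 i) (by rw [abs_neg]; exact hba₀ i) (by rw [abs_neg]; exact hba₁ i)
        (hbb₀ i) (hbb₁ i) (a₀ := -(a₀ i)) (a₁ := -(a₁ i)) (b₀ := b₀ i) (b₁ := b₁ i)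
      linarith
    have hsum := Finset.sum_le_sum hterm
    have : ∑ i, -(2 * (tA i * tB i)) = -(2 * ∑ i, tA i * tB i) := by
      rw [Finset.sum_neg_distrib, ← Finset.mul_sum]
    rw [this] at hsum
    linarith
  · -- upper bound
    have hterm : ∀ i ∈ Finset.univ,
        a₀ i * b₀ i + a₀ i * b₁ i + a₁ i * b₀ i - a₁ i * b₁ i ≤ 2 * (tA i * tB i) := by
      intro i _
      exact chsh_key (htA0 i) (hba₀ i) (hba₁ i) (hbb₀ i) (hbb₁ i)
    have hsum := Finset.sum_le_sum hterm
    have : ∑ i, 2 * (tA i * tB i) = 2 * ∑ i, tA i * tB i := by rw [← Finset.mul_sum]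
    rw [this] at hsum
    linarith
end

section
/- Let T be a real 3×3 matrix. Then the supremum over vectors a₀, a₁, b₀, b₁ ∈ ℝ³ with Euclidean norm at most 1 of the quantity ⟨a₀, T(b₀ + b₁)⟩ + ⟨a₁, T(b₀ − b₁)⟩ equals 2√(λ₁(TᵀT) + λ₂(TᵀT)), where λ₁(A) ≥ λ₂(A) denote the two largest eigenvalues of the symmetric matrix A, and this supremum is attained. -/
open Matrix

/-- The `k`-th largest eigenvalue of a symmetric real `3 × 3` matrix
(`k = 0` giving the largest). -/
noncomputable def eigDesc {A : Matrix (Fin 3) (Fin 3) ℝ} (hA : A.IsHermitian)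
    (k : Fin 3) : ℝ :=
  (hA.eigenvalues ∘ ⇑(Tuple.sort hA.eigenvalues)) k.rev

noncomputable section BCAux
local notation "E3" => EuclideanSpace ℝ (Fin 3)

lemma bc_din (x y : Fin 3 → ℝ) : x ⬝ᵥ y = @inner ℝ E3 _ (WithLp.toLp 2 x) (WithLp.toLp 2 y) := by
  simp [dotProduct, PiLp.inner_apply, RCLike.inner_apply, mul_comm]

lemma bc_dself (x : Fin 3 → ℝ) : 0 ≤ x ⬝ᵥ x :=
  Finset.sum_nonneg fun i _ => mul_self_nonneg _

/-- Euclidean norm of a plain vector. -/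
noncomputable def nE (x : Fin 3 → ℝ) : ℝ := ‖(WithLp.toLp 2 x : E3)‖

lemma nE_nonneg (x : Fin 3 → ℝ) : 0 ≤ nE x := norm_nonneg _

lemma nE_sq (x : Fin 3 → ℝ) : nE x ^ 2 = x ⬝ᵥ x := by
  rw [bc_din]; exact (real_inner_self_eq_norm_sq _).symm

lemma nE_add (x y : Fin 3 → ℝ) : nE (x + y) ≤ nE x + nE y := norm_add_le _ _

lemma nE_sub (x y : Fin 3 → ℝ) : nE (x - y) ≤ nE x + nE y := norm_sub_le _ _

lemma nE_smul (s : ℝ) (x : Fin 3 → ℝ) : nE (s • x) = |s| * nE x := by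
  show ‖s • (WithLp.toLp 2 x : E3)‖ = _
  rw [norm_smul, Real.norm_eq_abs]; rfl

lemma nE_neg (x : Fin 3 → ℝ) : nE (-x) = nE x := norm_neg _

lemma nE_zero : nE 0 = 0 := norm_zero

lemma nE_eq_zero {x : Fin 3 → ℝ} (h : nE x = 0) : x = 0 := by
  have := norm_eq_zero.mp h
  exact (WithLp.toLp_eq_zero (p := 2)).mp this

lemma nE_le_one {x : Fin 3 → ℝ} (h : x ⬝ᵥ x ≤ 1) : nE x ≤ 1 := by
  nlinarith [nE_sq x, nE_nonneg x]

lemma bc_cs (x y : Fin 3 → ℝ) : x ⬝ᵥ y ≤ nE x * nE y := by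
  rw [bc_din]; exact real_inner_le_norm _ _

lemma bc_sqrt4 {z : ℝ} (hz : 0 ≤ z) : Real.sqrt (4 * z) = 2 * Real.sqrt z := by
  rw [show (4:ℝ) * z = 2 ^ 2 * z by ring, Real.sqrt_mul (by positivity), Real.sqrt_sq (by norm_num)]

lemma bc_le_two_sqrt {a z : ℝ} (ha : 0 ≤ a) (hz : 0 ≤ z) (h : a ^ 2 ≤ 4 * z) :
    a ≤ 2 * Real.sqrt z := by
  have h2 := Real.sqrt_le_sqrt h
  rwa [Real.sqrt_sq ha, bc_sqrt4 hz] at h2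

variable (T : Matrix (Fin 3) (Fin 3) ℝ)

lemma bc_conjT : Tᴴ = Tᵀ := by
  ext i j
  simp [conjTranspose_apply]

lemma bc_polar (x y : Fin 3 → ℝ) :
    (T *ᵥ y) ⬝ᵥ (T *ᵥ x) = y ⬝ᵥ ((Tᴴ * T) *ᵥ x) := by
  rw [bc_conjT, ← mulVec_mulVec]
  conv_rhs => rw [dotProduct_mulVec, vecMul_transpose]

lemma bc_sym (x y : Fin 3 → ℝ) :
    y ⬝ᵥ ((Tᴴ * T) *ᵥ x) = ((Tᴴ * T) *ᵥ y) ⬝ᵥ x := by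
  rw [← bc_polar]
  conv_rhs => rw [dotProduct_comm, ← bc_polar]
  exact dotProduct_comm _ _

lemma bc_vdot (i j : Fin 3) :
    (⇑((isHermitian_conjTranspose_mul_self T).eigenvectorBasis i) ⬝ᵥ
     ⇑((isHermitian_conjTranspose_mul_self T).eigenvectorBasis j)) = if i = j then 1 else 0 := by
  rw [bc_din]
  exact orthonormal_iff_ite.mp (isHermitian_conjTranspose_mul_self T).eigenvectorBasis.orthonormal i j

lemma bc_repr (x : Fin 3 → ℝ) :
    x = ∑ i, (⇑((isHermitian_conjTranspose_mul_self T).eigenvectorBasis i) ⬝ᵥ x) •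
          ⇑((isHermitian_conjTranspose_mul_self T).eigenvectorBasis i) :=
  by
    have h := congrArg WithLp.ofLp
      ((isHermitian_conjTranspose_mul_self T).eigenvectorBasis.sum_repr' (WithLp.toLp 2 x : E3)).symm
    rw [WithLp.ofLp_sum] at h
    refine h.trans (Finset.sum_congr rfl fun i _ => ?_)
    rw [WithLp.ofLp_smul, bc_din]


lemma bc_abstract (M : Matrix (Fin 3) (Fin 3) ℝ) (v : Fin 3 → Fin 3 → ℝ) (μ c x : Fin 3 → ℝ)
    (hvd : ∀ i j, v i ⬝ᵥ v j = if i = j then 1 else 0)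
    (hmv : ∀ i, M *ᵥ v i = μ i • v i)
    (hx : x = c 0 • v 0 + c 1 • v 1 + c 2 • v 2) :
    x ⬝ᵥ (M *ᵥ x) = μ 0 * c 0 ^ 2 + μ 1 * c 1 ^ 2 + μ 2 * c 2 ^ 2 ∧
      x ⬝ᵥ x = c 0 ^ 2 + c 1 ^ 2 + c 2 ^ 2 := by
  have h00 : v 0 ⬝ᵥ v 0 = 1 := by simpa using hvd 0 0
  have h11 : v 1 ⬝ᵥ v 1 = 1 := by simpa using hvd 1 1
  have h22 : v 2 ⬝ᵥ v 2 = 1 := by simpa using hvd 2 2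
  have h01 : v 0 ⬝ᵥ v 1 = 0 := by simpa using hvd 0 1
  have h10 : v 1 ⬝ᵥ v 0 = 0 := by simpa using hvd 1 0
  have h02 : v 0 ⬝ᵥ v 2 = 0 := by simpa using hvd 0 2
  have h20 : v 2 ⬝ᵥ v 0 = 0 := by simpa using hvd 2 0
  have h12 : v 1 ⬝ᵥ v 2 = 0 := by simpa using hvd 1 2
  have h21 : v 2 ⬝ᵥ v 1 = 0 := by simpa using hvd 2 1
  subst hx
  constructor <;>
  · simp only [mulVec_add, mulVec_smul, hmv, add_dotProduct, smul_dotProduct,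
      dotProduct_add, dotProduct_smul, h00, h11, h22, h01, h10, h02, h20, h12, h21,
      smul_eq_mul, mul_zero, mul_one, add_zero, zero_add]
    ring

lemma bc_quad (x : Fin 3 → ℝ) :
    x ⬝ᵥ ((Tᴴ * T) *ᵥ x) =
      ∑ i, (isHermitian_conjTranspose_mul_self T).eigenvalues i *
        (⇑((isHermitian_conjTranspose_mul_self T).eigenvectorBasis i) ⬝ᵥ x) ^ 2 := by
  rw [Fin.sum_univ_three]
  exact (bc_abstract (Tᴴ * T) (fun i => ⇑((isHermitian_conjTranspose_mul_self T).eigenvectorBasis i))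
    (isHermitian_conjTranspose_mul_self T).eigenvalues
    (fun i => ⇑((isHermitian_conjTranspose_mul_self T).eigenvectorBasis i) ⬝ᵥ x) x
    (bc_vdot T) (fun i => (isHermitian_conjTranspose_mul_self T).mulVec_eigenvectorBasis i)
    (by simpa [Fin.sum_univ_three] using bc_repr T x)).1

lemma bc_parseval (x : Fin 3 → ℝ) :
    ∑ i, (⇑((isHermitian_conjTranspose_mul_self T).eigenvectorBasis i) ⬝ᵥ x) ^ 2 = x ⬝ᵥ x := by
  rw [Fin.sum_univ_three]
  exact ((bc_abstract (Tᴴ * T) (fun i => ⇑((isHermitian_conjTranspose_mul_self T).eigenvectorBasis i))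
    (isHermitian_conjTranspose_mul_self T).eigenvalues
    (fun i => ⇑((isHermitian_conjTranspose_mul_self T).eigenvectorBasis i) ⬝ᵥ x) x
    (bc_vdot T) (fun i => (isHermitian_conjTranspose_mul_self T).mulVec_eigenvectorBasis i)
    (by simpa [Fin.sum_univ_three] using bc_repr T x)).2).symm

lemma bc_Tv_dot (i : Fin 3) :
    (T *ᵥ ⇑((isHermitian_conjTranspose_mul_self T).eigenvectorBasis i)) ⬝ᵥ
      (T *ᵥ ⇑((isHermitian_conjTranspose_mul_self T).eigenvectorBasis i)) =
      (isHermitian_conjTranspose_mul_self T).eigenvalues i := by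
  rw [bc_polar, (isHermitian_conjTranspose_mul_self T).mulVec_eigenvectorBasis, dotProduct_smul,
    smul_eq_mul, bc_vdot]
  simp

lemma bc_mu_nonneg (i : Fin 3) : 0 ≤ (isHermitian_conjTranspose_mul_self T).eigenvalues i := by
  rw [← bc_Tv_dot]
  exact bc_dself _

lemma bc_selfdot (x : Fin 3 → ℝ) : nE (T *ᵥ x) ^ 2 = x ⬝ᵥ ((Tᴴ * T) *ᵥ x) := by
  rw [nE_sq, bc_polar]

lemma bc_bessel (c d u : Fin 3 → ℝ) (hc : c ⬝ᵥ c = 1) (hd : d ⬝ᵥ d = 1) (hcd : c ⬝ᵥ d = 0)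
    (hu : u ⬝ᵥ u = 1) : (u ⬝ᵥ c) ^ 2 + (u ⬝ᵥ d) ^ 2 ≤ 1 := by
  have h0 := bc_dself (u - (u ⬝ᵥ c) • c - (u ⬝ᵥ d) • d)
  simp only [sub_dotProduct, dotProduct_sub, smul_dotProduct, dotProduct_smul, smul_eq_mul] at h0
  have hdc : d ⬝ᵥ c = 0 := by rw [dotProduct_comm]; exact hcd
  have hcu : c ⬝ᵥ u = u ⬝ᵥ c := dotProduct_comm _ _
  have hdu : d ⬝ᵥ u = u ⬝ᵥ d := dotProduct_comm _ _
  rw [hc, hd, hcd, hdc, hcu, hdu, hu] at h0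
  nlinarith [h0]

lemma bc_mono01 :
    (isHermitian_conjTranspose_mul_self T).eigenvalues
      (Tuple.sort (isHermitian_conjTranspose_mul_self T).eigenvalues 0) ≤
    (isHermitian_conjTranspose_mul_self T).eigenvalues
      (Tuple.sort (isHermitian_conjTranspose_mul_self T).eigenvalues 1) :=
  Tuple.monotone_sort (isHermitian_conjTranspose_mul_self T).eigenvalues
    (show (0 : Fin 3) ≤ 1 by decide)

lemma bc_mono12 :
    (isHermitian_conjTranspose_mul_self T).eigenvalues
      (Tuple.sort (isHermitian_conjTranspose_mul_self T).eigenvalues 1) ≤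
    (isHermitian_conjTranspose_mul_self T).eigenvalues
      (Tuple.sort (isHermitian_conjTranspose_mul_self T).eigenvalues 2) :=
  Tuple.monotone_sort (isHermitian_conjTranspose_mul_self T).eigenvalues
    (show (1 : Fin 3) ≤ 2 by decide)

lemma bc_le_max (i : Fin 3) :
    (isHermitian_conjTranspose_mul_self T).eigenvalues i ≤
    (isHermitian_conjTranspose_mul_self T).eigenvalues
      (Tuple.sort (isHermitian_conjTranspose_mul_self T).eigenvalues 2) := by
  set μ := (isHermitian_conjTranspose_mul_self T).eigenvalues
  set σ := Tuple.sort μ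
  have h1 : μ i = (μ ∘ ⇑σ) (σ.symm i) := by simp
  rw [h1]
  exact Tuple.monotone_sort μ (show σ.symm i ≤ 2 from Fin.le_last _)

lemma bc_kyfan (c d : Fin 3 → ℝ) (hc : c ⬝ᵥ c = 1) (hd : d ⬝ᵥ d = 1) (hcd : c ⬝ᵥ d = 0) :
    c ⬝ᵥ ((Tᴴ * T) *ᵥ c) + d ⬝ᵥ ((Tᴴ * T) *ᵥ d) ≤
      (isHermitian_conjTranspose_mul_self T).eigenvalues
        (Tuple.sort (isHermitian_conjTranspose_mul_self T).eigenvalues 2) +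
      (isHermitian_conjTranspose_mul_self T).eigenvalues
        (Tuple.sort (isHermitian_conjTranspose_mul_self T).eigenvalues 1) := by
  set μ := (isHermitian_conjTranspose_mul_self T).eigenvalues with hμ
  set σ := Tuple.sort μ with hσ
  set w : Fin 3 → ℝ := fun i =>
    (⇑((isHermitian_conjTranspose_mul_self T).eigenvectorBasis i) ⬝ᵥ c) ^ 2 +
    (⇑((isHermitian_conjTranspose_mul_self T).eigenvectorBasis i) ⬝ᵥ d) ^ 2 with hw
  have hquad : c ⬝ᵥ ((Tᴴ * T) *ᵥ c) + d ⬝ᵥ ((Tᴴ * T) *ᵥ d) = ∑ i, μ i * w i := by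
    rw [bc_quad, bc_quad, ← Finset.sum_add_distrib]
    exact Finset.sum_congr rfl fun i _ => by rw [hw]; ring
  have hw1 : ∀ i, w i ≤ 1 := by
    intro i
    have hvu : ⇑((isHermitian_conjTranspose_mul_self T).eigenvectorBasis i) ⬝ᵥ
        ⇑((isHermitian_conjTranspose_mul_self T).eigenvectorBasis i) = 1 := by
      rw [bc_vdot]; simp
    exact bc_bessel c d _ hc hd hcd hvu
  have hw0 : ∀ i, 0 ≤ w i := fun i => by rw [hw]; positivity
  have hwsum : ∑ i, w i = 2 := by
    rw [hw, Finset.sum_add_distrib, bc_parseval, bc_parseval, hc, hd]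
    norm_num
  have hre : ∑ j, μ (σ j) * w (σ j) = ∑ i, μ i * w i :=
    Equiv.sum_comp σ (fun i => μ i * w i)
  have hre2 : ∑ j, w (σ j) = 2 := by rw [Equiv.sum_comp σ w]; exact hwsum
  rw [hquad, ← hre]
  rw [Fin.sum_univ_three] at hre2 ⊢
  have h01 := bc_mono01 T
  have h12 := bc_mono12 T
  rw [← hμ, ← hσ] at h01 h12
  have hkey : μ (σ 0) * w (σ 0) = 2 * μ (σ 0) - μ (σ 0) * w (σ 1) - μ (σ 0) * w (σ 2) := by
    have : w (σ 0) = 2 - w (σ 1) - w (σ 2) := by linarith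
    rw [this]; ring
  nlinarith [hkey, hw0 (σ 0), hw0 (σ 1), hw0 (σ 2), hw1 (σ 0), hw1 (σ 1), hw1 (σ 2),
    mul_nonneg (sub_nonneg.mpr h01) (sub_nonneg.mpr (hw1 (σ 1))),
    mul_nonneg (sub_nonneg.mpr (le_trans h01 h12)) (sub_nonneg.mpr (hw1 (σ 2)))]

lemma bc_small_bound (q : Fin 3 → ℝ) (hq : q ⬝ᵥ q ≤ 4) :
    nE (T *ᵥ q) ≤ 2 * Real.sqrt
      ((isHermitian_conjTranspose_mul_self T).eigenvalues
        (Tuple.sort (isHermitian_conjTranspose_mul_self T).eigenvalues 2) +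
       (isHermitian_conjTranspose_mul_self T).eigenvalues
        (Tuple.sort (isHermitian_conjTranspose_mul_self T).eigenvalues 1)) := by
  set μ := (isHermitian_conjTranspose_mul_self T).eigenvalues with hμ
  set σ := Tuple.sort μ with hσ
  have hL : 0 ≤ μ (σ 2) + μ (σ 1) :=
    add_nonneg (bc_mu_nonneg T _) (bc_mu_nonneg T _)
  apply bc_le_two_sqrt (nE_nonneg _) hL
  have h1 : nE (T *ᵥ q) ^ 2 = ∑ i, μ i *
      (⇑((isHermitian_conjTranspose_mul_self T).eigenvectorBasis i) ⬝ᵥ q) ^ 2 := by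
    rw [bc_selfdot, bc_quad]
  have h2 : ∑ i, μ i * (⇑((isHermitian_conjTranspose_mul_self T).eigenvectorBasis i) ⬝ᵥ q) ^ 2 ≤
      ∑ i, μ (σ 2) * (⇑((isHermitian_conjTranspose_mul_self T).eigenvectorBasis i) ⬝ᵥ q) ^ 2 := by
    refine Finset.sum_le_sum fun i _ => ?_
    exact mul_le_mul_of_nonneg_right (bc_le_max T i) (sq_nonneg _)
  have h3 : ∑ i, μ (σ 2) * (⇑((isHermitian_conjTranspose_mul_self T).eigenvectorBasis i) ⬝ᵥ q) ^ 2
      = μ (σ 2) * (q ⬝ᵥ q) := by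
    rw [← Finset.mul_sum, bc_parseval]
  have h4 : 0 ≤ μ (σ 2) := bc_mu_nonneg T _
  have h5 : 0 ≤ μ (σ 1) := bc_mu_nonneg T _
  nlinarith [h1, h2, h3, hq, h4, h5]

lemma bc_unit_bound (c d : Fin 3 → ℝ) (hc : c ⬝ᵥ c = 1) (hd : d ⬝ᵥ d = 1) :
    nE (T *ᵥ (c + d)) + nE (T *ᵥ (c - d)) ≤ 2 * Real.sqrt
      ((isHermitian_conjTranspose_mul_self T).eigenvalues
        (Tuple.sort (isHermitian_conjTranspose_mul_self T).eigenvalues 2) +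
       (isHermitian_conjTranspose_mul_self T).eigenvalues
        (Tuple.sort (isHermitian_conjTranspose_mul_self T).eigenvalues 1)) := by
  set μ := (isHermitian_conjTranspose_mul_self T).eigenvalues with hμ
  set σ := Tuple.sort μ with hσ
  have hL : 0 ≤ μ (σ 2) + μ (σ 1) :=
    add_nonneg (bc_mu_nonneg T _) (bc_mu_nonneg T _)
  set p := c + d with hp
  set q := c - d with hq
  have hsum : p ⬝ᵥ p + q ⬝ᵥ q = 4 := by
    have : p ⬝ᵥ p + q ⬝ᵥ q = 2 * (c ⬝ᵥ c) + 2 * (d ⬝ᵥ d) := by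
      rw [hp, hq]
      simp only [dotProduct_add, add_dotProduct, dotProduct_sub, sub_dotProduct]
      ring
    rw [this, hc, hd]; norm_num
  have hpq : p ⬝ᵥ q = 0 := by
    have hdc : d ⬝ᵥ c = c ⬝ᵥ d := dotProduct_comm _ _
    rw [hp, hq]
    simp only [dotProduct_sub, add_dotProduct, dotProduct_add, sub_dotProduct]
    rw [hdc] at *
    linarith [hc, hd]
  by_cases hp0 : p = 0
  · have h1 : nE (T *ᵥ p) = 0 := by rw [hp0, mulVec_zero, nE_zero]
    have h2 : q ⬝ᵥ q ≤ 4 := by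
      have := bc_dself p; linarith
    have := bc_small_bound T q h2
    rw [← hμ, ← hσ] at this
    linarith
  by_cases hq0 : q = 0
  · have h1 : nE (T *ᵥ q) = 0 := by rw [hq0, mulVec_zero, nE_zero]
    have h2 : p ⬝ᵥ p ≤ 4 := by
      have := bc_dself q; linarith
    have := bc_small_bound T p h2
    rw [← hμ, ← hσ] at this
    linarith
  · -- main case
    have hnp : 0 < nE p := by
      rcases (nE_nonneg p).lt_or_eq with h | h
      · exact h
      · exact absurd (nE_eq_zero h.symm) hp0
    have hnq : 0 < nE q := by
      rcases (nE_nonneg q).lt_or_eq with h | h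
      · exact h
      · exact absurd (nE_eq_zero h.symm) hq0
    set c' := (nE p)⁻¹ • p with hc'
    set d' := (nE q)⁻¹ • q with hd'
    have hpp : p ⬝ᵥ p = nE p ^ 2 := (nE_sq p).symm
    have hqq : q ⬝ᵥ q = nE q ^ 2 := (nE_sq q).symm
    have hc'c' : c' ⬝ᵥ c' = 1 := by
      rw [hc']
      simp only [smul_dotProduct, dotProduct_smul, smul_eq_mul]
      rw [hpp]
      field_simp
    have hd'd' : d' ⬝ᵥ d' = 1 := by
      rw [hd']
      simp only [smul_dotProduct, dotProduct_smul, smul_eq_mul]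
      rw [hqq]
      field_simp
    have hc'd' : c' ⬝ᵥ d' = 0 := by
      rw [hc', hd']
      simp only [smul_dotProduct, dotProduct_smul, smul_eq_mul]
      rw [hpq]; ring
    set X := nE (T *ᵥ c') with hX
    set Y := nE (T *ᵥ d') with hY
    have hXY : X ^ 2 + Y ^ 2 ≤ μ (σ 2) + μ (σ 1) := by
      rw [hX, hY, bc_selfdot, bc_selfdot]
      have := bc_kyfan T c' d' hc'c' hd'd' hc'd'
      rw [← hμ, ← hσ] at this
      exact this
    have hTp : nE (T *ᵥ p) = nE p * X := by
      have hpc : p = nE p • c' := by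
        rw [hc', smul_smul, mul_inv_cancel₀ (ne_of_gt hnp), one_smul]
      conv_lhs => rw [hpc]
      rw [mulVec_smul, nE_smul, abs_of_nonneg (le_of_lt hnp)]
    have hTq : nE (T *ᵥ q) = nE q * Y := by
      have hqd : q = nE q • d' := by
        rw [hd', smul_smul, mul_inv_cancel₀ (ne_of_gt hnq), one_smul]
      conv_lhs => rw [hqd]
      rw [mulVec_smul, nE_smul, abs_of_nonneg (le_of_lt hnq)]
    rw [hTp, hTq]
    apply bc_le_two_sqrt _ hL
    · have hX0 : 0 ≤ X := nE_nonneg _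
      have hY0 : 0 ≤ Y := nE_nonneg _
      have h44 : nE p ^ 2 + nE q ^ 2 = 4 := by rw [← hpp, ← hqq]; exact hsum
      nlinarith [sq_nonneg (nE p * Y - nE q * X), hXY, h44, hX0, hY0, hnp.le, hnq.le,
        sq_nonneg X, sq_nonneg Y]
    · exact add_nonneg (mul_nonneg hnp.le (nE_nonneg _)) (mul_nonneg hnq.le (nE_nonneg _))

lemma bc_avg (u w : Fin 3 → ℝ) (s : ℝ) (h0 : 0 ≤ s) (h1 : s ≤ 1) :
    nE (T *ᵥ (s • u + w)) ≤
      (1 + s) / 2 * nE (T *ᵥ (u + w)) + (1 - s) / 2 * nE (T *ᵥ (u - w)) := by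
  have hdec : s • u + w = ((1 + s) / 2) • (u + w) - ((1 - s) / 2) • (u - w) := by
    module
  rw [hdec, mulVec_sub, mulVec_smul, mulVec_smul]
  refine le_trans (nE_sub _ _) ?_
  rw [nE_smul, nE_smul, abs_of_nonneg (by linarith), abs_of_nonneg (by linarith)]

lemma bc_red (b y : Fin 3 → ℝ) (hb : b ⬝ᵥ b ≤ 1) :
    ∃ c : Fin 3 → ℝ, c ⬝ᵥ c = 1 ∧
      nE (T *ᵥ (b + y)) + nE (T *ᵥ (b - y)) ≤
      nE (T *ᵥ (c + y)) + nE (T *ᵥ (c - y)) := by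
  by_cases hb0 : b = 0
  · refine ⟨(fun j => if j = 0 then 1 else 0), ?_, ?_⟩
    · simp [dotProduct, Fin.sum_univ_three]
    · set e : Fin 3 → ℝ := fun j => if j = 0 then 1 else 0 with he
      have h2y : (2 : ℝ) • y = (e + y) - (e - y) := by module
      have key : nE (T *ᵥ ((2:ℝ) • y)) ≤ nE (T *ᵥ (e + y)) + nE (T *ᵥ (e - y)) := by
        rw [h2y, mulVec_sub]
        exact nE_sub _ _
      rw [mulVec_smul, nE_smul] at key
      have habs : |(2:ℝ)| = 2 := by norm_num
      rw [habs] at key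
      have hby : nE (T *ᵥ (b + y)) = nE (T *ᵥ y) := by rw [hb0, zero_add]
      have hby' : nE (T *ᵥ (b - y)) = nE (T *ᵥ y) := by
        rw [hb0, zero_sub, mulVec_neg, nE_neg]
      rw [hby, hby']
      linarith
  · set s := nE b with hs
    have hs0 : 0 < s := by
      rcases (nE_nonneg b).lt_or_eq with h | h
      · exact h
      · exact absurd (nE_eq_zero h.symm) hb0
    have hs1 : s ≤ 1 := by
      have := nE_sq b
      nlinarith
    refine ⟨s⁻¹ • b, ?_, ?_⟩
    · simp only [smul_dotProduct, dotProduct_smul, smul_eq_mul]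
      rw [show b ⬝ᵥ b = s ^ 2 from (nE_sq b).symm]
      field_simp
    · set c := s⁻¹ • b with hc
      have hbc : b = s • c := by
        rw [hc, smul_smul, mul_inv_cancel₀ (ne_of_gt hs0), one_smul]
      have t1 : nE (T *ᵥ (b + y)) ≤
          (1 + s) / 2 * nE (T *ᵥ (c + y)) + (1 - s) / 2 * nE (T *ᵥ (c - y)) := by
        conv_lhs => rw [hbc]
        exact bc_avg T c y s hs0.le hs1
      have t2 : nE (T *ᵥ (b - y)) ≤
          (1 + s) / 2 * nE (T *ᵥ (c - y)) + (1 - s) / 2 * nE (T *ᵥ (c + y)) := by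
        have hb' : b - y = s • c + (-y) := by rw [hbc]; abel
        have := bc_avg T c (-y) s hs0.le hs1
        rw [show c + -y = c - y by abel, show c - -y = c + y by abel] at this
        rw [hb']
        exact this
      linarith

lemma bc_e0 : eigDesc (isHermitian_conjTranspose_mul_self T) 0 =
    (isHermitian_conjTranspose_mul_self T).eigenvalues
      (Tuple.sort (isHermitian_conjTranspose_mul_self T).eigenvalues 2) := by
  have : ((0 : Fin 3).rev) = 2 := by decide
  simp [eigDesc, this]

lemma bc_e1 : eigDesc (isHermitian_conjTranspose_mul_self T) 1 =
    (isHermitian_conjTranspose_mul_self T).eigenvalues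
      (Tuple.sort (isHermitian_conjTranspose_mul_self T).eigenvalues 1) := by
  have : ((1 : Fin 3).rev) = 1 := by decide
  simp [eigDesc, this]

end BCAux

/-- the maximum of `⟨a₀, T(b₀+b₁)⟩ + ⟨a₁, T(b₀-b₁)⟩` over unit-ball
vectors `a₀, a₁, b₀, b₁ ∈ ℝ³` equals `2 √(λ₁(TᵀT) + λ₂(TᵀT))`, and it is attained. -/
theorem bloch_chsh_sup
    (T : Matrix (Fin 3) (Fin 3) ℝ) :
    IsGreatest
      {x : ℝ | ∃ a₀ a₁ b₀ b₁ : Fin 3 → ℝ,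
        a₀ ⬝ᵥ a₀ ≤ 1 ∧ a₁ ⬝ᵥ a₁ ≤ 1 ∧ b₀ ⬝ᵥ b₀ ≤ 1 ∧ b₁ ⬝ᵥ b₁ ≤ 1 ∧
        x = a₀ ⬝ᵥ T.mulVec (b₀ + b₁) + a₁ ⬝ᵥ T.mulVec (b₀ - b₁)}
      (2 * Real.sqrt (eigDesc (Matrix.isHermitian_conjTranspose_mul_self T) 0
        + eigDesc (Matrix.isHermitian_conjTranspose_mul_self T) 1)) := by
  have e0 := bc_e0 T
  have e1 := bc_e1 T
  set μ := (isHermitian_conjTranspose_mul_self T).eigenvalues with hμ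
  set σ := Tuple.sort μ with hσ
  set l₁ := μ (σ 2) with hl₁
  set l₂ := μ (σ 1) with hl₂
  have hl₁0 : 0 ≤ l₁ := bc_mu_nonneg T _
  have hl₂0 : 0 ≤ l₂ := bc_mu_nonneg T _
  constructor
  · -- membership
    show ∃ a₀ a₁ b₀ b₁ : Fin 3 → ℝ, _
    by_cases hzero : l₁ + l₂ = 0
    · refine ⟨0, 0, 0, 0, by simp [bc_dself], by simp [bc_dself], by simp [bc_dself],
        by simp [bc_dself], ?_⟩
      rw [e0, e1, hzero, Real.sqrt_zero]
      simp
    · have hpos : 0 < l₁ + l₂ := lt_of_le_of_ne (by linarith) (Ne.symm hzero)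
      have h12 : l₂ ≤ l₁ := by
        have := bc_mono12 T; rw [← hμ, ← hσ] at this; exact this
      have hl₁pos : 0 < l₁ := by linarith
      set s := Real.sqrt (l₁ + l₂) with hs
      have hs2 : s ^ 2 = l₁ + l₂ := Real.sq_sqrt hpos.le
      have hspos : 0 < s := Real.sqrt_pos.mpr hpos
      set sq1 := Real.sqrt l₁ with hsq1
      set sq2 := Real.sqrt l₂ with hsq2
      have hsq1sq : sq1 ^ 2 = l₁ := Real.sq_sqrt hl₁0
      have hsq2sq : sq2 ^ 2 = l₂ := Real.sq_sqrt hl₂0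
      have hsq1pos : 0 < sq1 := Real.sqrt_pos.mpr hl₁pos
      have hsq2nn : 0 ≤ sq2 := Real.sqrt_nonneg _
      set v₁ : Fin 3 → ℝ := ⇑((isHermitian_conjTranspose_mul_self T).eigenvectorBasis (σ 2)) with hv₁
      set v₂ : Fin 3 → ℝ := ⇑((isHermitian_conjTranspose_mul_self T).eigenvectorBasis (σ 1)) with hv₂
      have hv11 : v₁ ⬝ᵥ v₁ = 1 := by rw [hv₁, bc_vdot]; simp
      have hv22 : v₂ ⬝ᵥ v₂ = 1 := by rw [hv₂, bc_vdot]; simp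
      have hne : σ 2 ≠ σ 1 := fun h => by
        have := σ.injective h; exact absurd this (by decide)
      have hv12 : v₁ ⬝ᵥ v₂ = 0 := by rw [hv₁, hv₂, bc_vdot]; simp [hne]
      have hv21 : v₂ ⬝ᵥ v₁ = 0 := by rw [dotProduct_comm]; exact hv12
      have hT1 : (T *ᵥ v₁) ⬝ᵥ (T *ᵥ v₁) = l₁ := bc_Tv_dot T (σ 2)
      have hT2 : (T *ᵥ v₂) ⬝ᵥ (T *ᵥ v₂) = l₂ := bc_Tv_dot T (σ 1)
      refine ⟨sq1⁻¹ • (T *ᵥ v₁), sq2⁻¹ • (T *ᵥ v₂),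
        (sq1 / s) • v₁ + (sq2 / s) • v₂, (sq1 / s) • v₁ - (sq2 / s) • v₂, ?_, ?_, ?_, ?_, ?_⟩
      · simp only [smul_dotProduct, dotProduct_smul, smul_eq_mul, hT1]
        have h1 : sq1⁻¹ * (sq1⁻¹ * l₁) = 1 := by
          rw [← hsq1sq]; field_simp
        exact le_of_eq h1
      · simp only [smul_dotProduct, dotProduct_smul, smul_eq_mul, hT2]
        rcases eq_or_lt_of_le hl₂0 with h2z | h2p
        · rw [← h2z]; norm_num
        · have hsq2pos : 0 < sq2 := Real.sqrt_pos.mpr h2p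
          have h1 : sq2⁻¹ * (sq2⁻¹ * l₂) = 1 := by
            rw [← hsq2sq]; field_simp
          exact le_of_eq h1
      · simp only [dotProduct_add, add_dotProduct, smul_dotProduct, dotProduct_smul,
          smul_eq_mul, hv11, hv22, hv12, hv21]
        have h1 : (sq1 / s) ^ 2 + (sq2 / s) ^ 2 = 1 := by
          rw [div_pow, div_pow, hsq1sq, hsq2sq, hs2, ← add_div,
            div_self (ne_of_gt hpos)]
        exact le_of_eq (by linear_combination h1)
      · simp only [dotProduct_sub, sub_dotProduct, dotProduct_add, add_dotProduct,
          smul_dotProduct, dotProduct_smul, smul_eq_mul, hv11, hv22, hv12, hv21]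
        have h1 : (sq1 / s) ^ 2 + (sq2 / s) ^ 2 = 1 := by
          rw [div_pow, div_pow, hsq1sq, hsq2sq, hs2, ← add_div,
            div_self (ne_of_gt hpos)]
        exact le_of_eq (by linear_combination h1)
      · have hadd : (sq1 / s) • v₁ + (sq2 / s) • v₂ + ((sq1 / s) • v₁ - (sq2 / s) • v₂)
            = (2 * (sq1 / s)) • v₁ := by module
        have hsub : (sq1 / s) • v₁ + (sq2 / s) • v₂ - ((sq1 / s) • v₁ - (sq2 / s) • v₂)
            = (2 * (sq2 / s)) • v₂ := by module
        rw [e0, e1]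
        rw [hadd, hsub, mulVec_smul, mulVec_smul]
        simp only [smul_dotProduct, dotProduct_smul, smul_eq_mul, hT1, hT2]
        have term1 : 2 * (sq1 / s) * (sq1⁻¹ * l₁) = 2 * l₁ / s := by
          field_simp
        have term2 : 2 * (sq2 / s) * (sq2⁻¹ * l₂) = 2 * l₂ / s := by
          rcases eq_or_lt_of_le hl₂0 with h2z | h2p
          · have hz2 : sq2 = 0 := by rw [hsq2, ← h2z, Real.sqrt_zero]
            rw [← h2z, hz2]; simp
          · have hsq2pos : 0 < sq2 := Real.sqrt_pos.mpr h2p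
            field_simp
        rw [term1, term2, ← hs]
        rw [show 2 * l₁ / s + 2 * l₂ / s = 2 * (l₁ + l₂) / s by ring, ← hs2]
        field_simp
  · -- upper bound
    rintro x ⟨a₀, a₁, b₀, b₁, ha₀, ha₁, hb₀, hb₁, rfl⟩
    have key : ∀ (a p : Fin 3 → ℝ), a ⬝ᵥ a ≤ 1 → a ⬝ᵥ (T *ᵥ p) ≤ nE (T *ᵥ p) := by
      intro a p ha
      calc a ⬝ᵥ (T *ᵥ p) ≤ nE a * nE (T *ᵥ p) := bc_cs _ _
        _ ≤ 1 * nE (T *ᵥ p) := by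
            exact mul_le_mul_of_nonneg_right (nE_le_one ha) (nE_nonneg _)
        _ = nE (T *ᵥ p) := one_mul _
    have h1 : a₀ ⬝ᵥ (T *ᵥ (b₀ + b₁)) + a₁ ⬝ᵥ (T *ᵥ (b₀ - b₁)) ≤
        nE (T *ᵥ (b₀ + b₁)) + nE (T *ᵥ (b₀ - b₁)) :=
      add_le_add (key _ _ ha₀) (key _ _ ha₁)
    obtain ⟨c, hcc, hcle⟩ := bc_red T b₀ b₁ hb₀
    have hswap : nE (T *ᵥ (c + b₁)) + nE (T *ᵥ (c - b₁)) =
        nE (T *ᵥ (b₁ + c)) + nE (T *ᵥ (b₁ - c)) := by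
      rw [show c + b₁ = b₁ + c by abel, show c - b₁ = -(b₁ - c) by abel, mulVec_neg, nE_neg]
    obtain ⟨c₂, hc₂c₂, hc₂le⟩ := bc_red T b₁ c hb₁
    have hfin := bc_unit_bound T c₂ c hc₂c₂ hcc
    rw [← hμ, ← hσ] at hfin
    rw [e0, e1]
    linarith
end
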